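/- Let C ∈ (-1, 0), C ≠ 0, and ν ∈ (|C|, 1). Set w₊ = (√(1-C^2) + √(ν^2-C^2))^2/(1-ν^2) and w₋ = (√(1-C^2) - √(ν^2-C^2))^2/(1-ν^2). Then 0 < w₋ < 1 < w₊, w₊·w₋ = 1, and the set of complex roots of the polynomial φ₄(z) = (1-ν^2)z^4 + 2(2C^2 - ν^2 - 1)z^2 + (1-ν^2) is exactly the four real numbers {√(w₊), -√(w₊), √(w₋), -√(w₋)}; in particular two roots lie in the open unit disc and two roots have modulus strictly greater than one. -/

import Mathlib

open Real Complex

set_option maxHeartbeats 2000000 in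
/-- For `C ∈ (-1,0)` and `ν ∈ (|C|,1)`, with
`w₊ = (√(1-C²)+√(ν²-C²))²/(1-ν²)` and `w₋ = (√(1-C²)-√(ν²-C²))²/(1-ν²)`,
one has `0 < w₋ < 1 < w₊`, `w₊·w₋ = 1`, and the roots of
`φ₄(z) = (1-ν²)z⁴ + 2(2C²-ν²-1)z² + (1-ν²)` are exactly
`{√w₊, -√w₊, √w₋, -√w₋}`; in particular two roots lie in the open unit disc
and two have modulus strictly greater than one. -/
theorem saddle_points_ahead_of_front (C ν : ℝ) (hC : C ∈ Set.Ioo (-1 : ℝ) 0) (hC0 : C ≠ 0)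
    (hν : ν ∈ Set.Ioo |C| 1) :
    let wp : ℝ := (Real.sqrt (1 - C ^ 2) + Real.sqrt (ν ^ 2 - C ^ 2)) ^ 2 / (1 - ν ^ 2)
    let wm : ℝ := (Real.sqrt (1 - C ^ 2) - Real.sqrt (ν ^ 2 - C ^ 2)) ^ 2 / (1 - ν ^ 2)
    (0 < wm ∧ wm < 1 ∧ 1 < wp) ∧ wp * wm = 1 ∧
    ({z : ℂ | (1 - (ν : ℂ) ^ 2) * z ^ 4 + 2 * (2 * (C : ℂ) ^ 2 - (ν : ℂ) ^ 2 - 1) * z ^ 2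
        + (1 - (ν : ℂ) ^ 2) = 0} =
      {((Real.sqrt wp : ℝ) : ℂ), -((Real.sqrt wp : ℝ) : ℂ),
        ((Real.sqrt wm : ℝ) : ℂ), -((Real.sqrt wm : ℝ) : ℂ)}) ∧
    (‖((Real.sqrt wm : ℝ) : ℂ)‖ < 1 ∧ ‖(-((Real.sqrt wm : ℝ) : ℂ))‖ < 1) ∧
    (1 < ‖((Real.sqrt wp : ℝ) : ℂ)‖ ∧ 1 < ‖(-((Real.sqrt wp : ℝ) : ℂ))‖) := by
  intro wp wm
  obtain ⟨hC1, hC2⟩ := hC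
  obtain ⟨hν1, hν2⟩ := hν
  have hCabs : (0:ℝ) ≤ |C| := abs_nonneg C
  have hν0 : 0 < ν := lt_of_le_of_lt hCabs hν1
  have hν2sq : ν ^ 2 < 1 := by nlinarith
  have h1ν : 0 < 1 - ν ^ 2 := by linarith
  have hC2lt : C ^ 2 < ν ^ 2 := by
    have := _root_.sq_abs C
    nlinarith [sq_lt_sq' (by linarith [abs_nonneg C, neg_abs_le C] : -ν < C) (lt_of_le_of_lt (le_abs_self C) hν1)]
  have hC2pos : 0 < C ^ 2 := by positivity
  set a : ℝ := Real.sqrt (1 - C ^ 2) with ha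
  set b : ℝ := Real.sqrt (ν ^ 2 - C ^ 2) with hb
  have ha2 : a ^ 2 = 1 - C ^ 2 := Real.sq_sqrt (by nlinarith)
  have hb2 : b ^ 2 = ν ^ 2 - C ^ 2 := Real.sq_sqrt (by linarith)
  have ha0 : 0 ≤ a := Real.sqrt_nonneg _
  have hb0 : 0 < b := Real.sqrt_pos.mpr (by linarith)
  have hba : b < a := by nlinarith
  have hwpd : wp = (a + b) ^ 2 / (1 - ν ^ 2) := rfl
  have hwmd : wm = (a - b) ^ 2 / (1 - ν ^ 2) := rfl
  clear_value wp wm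
  have hwm0 : 0 < wm := by
    rw [hwmd]
    exact div_pos (pow_pos (sub_pos.mpr hba) 2) h1ν
  have hwp0 : 0 < wp := by
    rw [hwpd]
    exact div_pos (pow_pos (by linarith) 2) h1ν
  have hprod : wp * wm = 1 := by
    rw [hwpd, hwmd]
    field_simp
    nlinarith [ha2, hb2]
  have hwmwp : wm < wp := by
    rw [hwpd, hwmd, div_lt_div_iff₀ h1ν h1ν]
    nlinarith [mul_pos (mul_pos hb0 (hb0.trans hba)) h1ν]
  have hwm1 : wm < 1 := by nlinarith
  have hwp1 : 1 < wp := by nlinarith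
  have hsum : (1 - ν ^ 2) * (wp + wm) = 2 * (1 + ν ^ 2 - 2 * C ^ 2) := by
    have e : (a + b) ^ 2 + (a - b) ^ 2 = 2 * (1 + ν ^ 2 - 2 * C ^ 2) := by
      nlinarith [ha2, hb2]
    rw [hwpd, hwmd, ← add_div, e, mul_div_cancel₀ _ h1ν.ne']
  refine ⟨⟨hwm0, hwm1, hwp1⟩, hprod, ?_, ?_, ?_⟩
  · -- set equality
    have hsC : ((1:ℂ) - (ν:ℂ) ^ 2) * ((wp:ℂ) + (wm:ℂ)) = 2 * (1 + (ν:ℂ) ^ 2 - 2 * (C:ℂ) ^ 2) := by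
      exact_mod_cast hsum
    have hpC : ((wp:ℂ)) * ((wm:ℂ)) = 1 := by exact_mod_cast hprod
    have hpsq : ((Real.sqrt wp : ℝ) : ℂ) ^ 2 = (wp:ℂ) := by
      rw [← Complex.ofReal_pow, Real.sq_sqrt hwp0.le]
    have hmsq : ((Real.sqrt wm : ℝ) : ℂ) ^ 2 = (wm:ℂ) := by
      rw [← Complex.ofReal_pow, Real.sq_sqrt hwm0.le]
    have h1νC : ((1:ℂ) - (ν:ℂ) ^ 2) ≠ 0 := by
      have : ((1 - ν ^ 2 : ℝ) : ℂ) ≠ 0 := by exact_mod_cast h1ν.ne'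
      push_cast at this
      exact this
    ext z
    simp only [Set.mem_setOf_eq, Set.mem_insert_iff, Set.mem_singleton_iff]
    have key : (1 - (ν : ℂ) ^ 2) * z ^ 4 + 2 * (2 * (C : ℂ) ^ 2 - (ν : ℂ) ^ 2 - 1) * z ^ 2
        + (1 - (ν : ℂ) ^ 2)
        = (1 - (ν:ℂ) ^ 2) * (z - ((Real.sqrt wp : ℝ) : ℂ)) * (z + ((Real.sqrt wp : ℝ) : ℂ))
          * (z - ((Real.sqrt wm : ℝ) : ℂ)) * (z + ((Real.sqrt wm : ℝ) : ℂ)) := by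
      have e1 : (z - ((Real.sqrt wp : ℝ) : ℂ)) * (z + ((Real.sqrt wp : ℝ) : ℂ)) = z ^ 2 - (wp:ℂ) := by
        rw [← hpsq]; ring
      have e2 : (z - ((Real.sqrt wm : ℝ) : ℂ)) * (z + ((Real.sqrt wm : ℝ) : ℂ)) = z ^ 2 - (wm:ℂ) := by
        rw [← hmsq]; ring
      calc (1 - (ν : ℂ) ^ 2) * z ^ 4 + 2 * (2 * (C : ℂ) ^ 2 - (ν : ℂ) ^ 2 - 1) * z ^ 2
            + (1 - (ν : ℂ) ^ 2)
          = (1 - (ν:ℂ) ^ 2) * ((z ^ 2 - (wp:ℂ)) * (z ^ 2 - (wm:ℂ))) := by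
            linear_combination (z ^ 2) * hsC - (1 - (ν:ℂ) ^ 2) * hpC
        _ = (1 - (ν:ℂ) ^ 2) * (z - ((Real.sqrt wp : ℝ) : ℂ)) * (z + ((Real.sqrt wp : ℝ) : ℂ))
            * (z - ((Real.sqrt wm : ℝ) : ℂ)) * (z + ((Real.sqrt wm : ℝ) : ℂ)) := by
            rw [← e1, ← e2]; ring
    rw [key]
    constructor
    · intro h
      simp only [mul_eq_zero, h1νC, false_or, sub_eq_zero, add_eq_zero_iff_eq_neg] at h
      tauto
    · rintro (rfl | rfl | rfl | rfl) <;> ring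
  · constructor <;>
    · simp only [norm_neg, Complex.norm_real, Real.norm_eq_abs,
        _root_.abs_of_nonneg (Real.sqrt_nonneg _)]
      have : Real.sqrt wm < Real.sqrt 1 := Real.sqrt_lt_sqrt hwm0.le hwm1
      simpa using this
  · constructor <;>
    · simp only [norm_neg, Complex.norm_real, Real.norm_eq_abs,
        _root_.abs_of_nonneg (Real.sqrt_nonneg _)]
      have : Real.sqrt 1 < Real.sqrt wp := Real.sqrt_lt_sqrt (by norm_num) hwp1
      simpa using this
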